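/- Let C be a symmetric positive definite 3×3 real matrix and v ∈ ℝ³ a vector such that vᵀCv < det C. Then the symmetric 6×6 block matrix D = [[C, −M_v],[M_v, C]] is positive definite. -/

import Mathlib

open Matrix

/-- The skew-symmetric `3 × 3` matrix of the cross product with `v`:
`crossMatrix v *ᵥ w = v ×₃ w`. -/
def crossMatrix (v : Fin 3 → ℝ) : Matrix (Fin 3) (Fin 3) ℝ :=
  !![0, -v 2, v 1; v 2, 0, -v 0; -v 1, v 0, 0]

/-- A positive definite block matrix criterion via the Schur complement. -/
lemma posDef_fromBlocks {m n : Type*} [Fintype m] [Fintype n] [DecidableEq m]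
    {A : Matrix m m ℝ} (B : Matrix m n ℝ) (D : Matrix n n ℝ) (hA : A.PosDef)
    [Invertible A] (hS : (D - Bᴴ * A⁻¹ * B).PosDef) :
    (Matrix.fromBlocks A B Bᴴ D).PosDef := by
  rw [posDef_iff_dotProduct_mulVec]
  constructor
  · exact (Matrix.IsHermitian.fromBlocks₁₁ B D hA.1).mpr hS.1
  · intro z hz
    rw [dotProduct_mulVec, ← Sum.elim_comp_inl_inr z,
      Matrix.schur_complement_eq₁₁ B D _ _ hA.1]
    by_cases hy : z ∘ Sum.inr = 0
    · have hx : z ∘ Sum.inl ≠ 0 := by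
        intro hx
        apply hz
        rw [← Sum.elim_comp_inl_inr z, hx, hy]
        ext (i | i) <;> rfl
      have h1 : 0 < star (z ∘ Sum.inl + (A⁻¹ * B) *ᵥ (z ∘ Sum.inr)) ᵥ* A ⬝ᵥ
          (z ∘ Sum.inl + (A⁻¹ * B) *ᵥ (z ∘ Sum.inr)) := by
        rw [hy, Matrix.mulVec_zero, add_zero, ← dotProduct_mulVec]
        exact hA.dotProduct_mulVec_pos (by simpa using hx)
      have h2 : star (z ∘ Sum.inr) ᵥ* (D - Bᴴ * A⁻¹ * B) ⬝ᵥ (z ∘ Sum.inr) = 0 := by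
        rw [hy]; simp
      linarith
    · have h1 : 0 ≤ star (z ∘ Sum.inl + (A⁻¹ * B) *ᵥ (z ∘ Sum.inr)) ᵥ* A ⬝ᵥ
          (z ∘ Sum.inl + (A⁻¹ * B) *ᵥ (z ∘ Sum.inr)) := by
        rw [← dotProduct_mulVec]
        exact hA.posSemidef.dotProduct_mulVec_nonneg _
      have h2 : 0 < star (z ∘ Sum.inr) ᵥ* (D - Bᴴ * A⁻¹ * B) ⬝ᵥ (z ∘ Sum.inr) := by
        rw [← dotProduct_mulVec]
        exact hS.dotProduct_mulVec_pos hy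
      linarith

lemma crossMatrix_conjTranspose (v : Fin 3 → ℝ) :
    (-(crossMatrix v))ᴴ = crossMatrix v := by
  ext i j
  fin_cases i <;> fin_cases j <;> simp [crossMatrix]

/-- The key algebraic identity: `M_v (adj C) M_v = (Cv)(Cv)ᵀ − (vᵀCv) C`
for a symmetric `C`. -/
lemma cross_adjugate_cross (C : Matrix (Fin 3) (Fin 3) ℝ) (hsymm : C.IsSymm)
    (v : Fin 3 → ℝ) :
    crossMatrix v * C.adjugate * crossMatrix v =
      vecMulVec (C *ᵥ v) (C *ᵥ v) - (v ⬝ᵥ C *ᵥ v) • C := by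
  have hC : C = !![C 0 0, C 0 1, C 0 2; C 0 1, C 1 1, C 1 2; C 0 2, C 1 2, C 2 2] := by
    ext i j
    fin_cases i <;> fin_cases j <;>
      simp [hsymm.apply] <;> first | rfl | exact hsymm.apply _ _
  rw [hC]
  ext i j
  fin_cases i <;> fin_cases j <;>
    simp [crossMatrix, Matrix.adjugate_fin_three, Matrix.mul_apply, Matrix.vecMulVec_apply,
      Matrix.mulVec, dotProduct, Fin.sum_univ_three, Matrix.smul_apply] <;>
    ring

/-- If `C` is a symmetric positive definite `3 × 3` real matrix and `v ∈ ℝ³` satisfies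
`vᵀ C v < det C`, then the block matrix `D = [[C, −M_v], [M_v, C]]` is positive definite. -/
theorem blockMatrix_posDef (C : Matrix (Fin 3) (Fin 3) ℝ) (hsymm : C.IsSymm)
    (hpd : C.PosDef) (v : Fin 3 → ℝ) (hlt : v ⬝ᵥ C.mulVec v < C.det) :
    (Matrix.fromBlocks C (-(crossMatrix v)) (crossMatrix v) C).PosDef := by
  have hdet : 0 < C.det := hpd.det_pos
  haveI : Invertible C := C.invertibleOfIsUnitDet (isUnit_iff_ne_zero.mpr hdet.ne')
  suffices h : (C - (-(crossMatrix v))ᴴ * C⁻¹ * (-(crossMatrix v))).PosDef by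
    have := posDef_fromBlocks (-(crossMatrix v)) C hpd h
    rwa [crossMatrix_conjTranspose] at this
  rw [crossMatrix_conjTranspose]
  have hinv : C⁻¹ = C.det⁻¹ • C.adjugate := by
    rw [Matrix.inv_def, Ring.inverse_eq_inv]
  have hS : C - crossMatrix v * C⁻¹ * -(crossMatrix v) =
      C + C.det⁻¹ • (vecMulVec (C *ᵥ v) (C *ᵥ v) - (v ⬝ᵥ C *ᵥ v) • C) := by
    rw [hinv, ← cross_adjugate_cross C hsymm v]
    rw [Matrix.mul_neg, sub_neg_eq_add, Matrix.mul_smul, Matrix.smul_mul]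
  rw [hS]
  set w := C *ᵥ v with hw
  set q := v ⬝ᵥ C *ᵥ v with hq
  have hq0 : 0 ≤ q := by
    have := hpd.posSemidef.dotProduct_mulVec_nonneg v
    rwa [star_trivial] at this
  rw [posDef_iff_dotProduct_mulVec]
  constructor
  · ext i j
    simp only [Matrix.conjTranspose_apply, Matrix.add_apply, Matrix.smul_apply,
      Matrix.sub_apply, Matrix.vecMulVec_apply, star_trivial, smul_eq_mul,
      hsymm.apply i j, mul_comm (w j) (w i)]
  · intro x hx
    have hvv : vecMulVec w w *ᵥ x = (w ⬝ᵥ x) • w := by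
      ext i
      simp [Matrix.mulVec, Matrix.vecMulVec_apply, dotProduct, Fin.sum_univ_three]
      ring
    have ht : 0 < x ⬝ᵥ C *ᵥ x := by
      have := hpd.dotProduct_mulVec_pos hx
      rwa [star_trivial] at this
    have hexp : star x ⬝ᵥ (C + C.det⁻¹ • (vecMulVec w w - q • C)) *ᵥ x
        = x ⬝ᵥ C *ᵥ x + C.det⁻¹ * ((w ⬝ᵥ x) * (w ⬝ᵥ x) - q * (x ⬝ᵥ C *ᵥ x)) := by
      simp only [star_trivial, Matrix.add_mulVec, Matrix.smul_mulVec,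
        Matrix.sub_mulVec, hvv, dotProduct_add, dotProduct_smul, dotProduct_sub,
        smul_eq_mul, dotProduct_comm x w]
      try ring
    rw [hexp]
    set t := x ⬝ᵥ C *ᵥ x
    set s := w ⬝ᵥ x
    have key : t + C.det⁻¹ * (s * s - q * t) = t * (1 - q / C.det) + s * s / C.det := by
      field_simp
      ring
    rw [key]
    have h1 : 0 < t * (1 - q / C.det) :=
      mul_pos ht (by rw [sub_pos]; exact (div_lt_one hdet).2 hlt)
    have h2 : 0 ≤ s * s / C.det := div_nonneg (mul_self_nonneg s) hdet.le
    linarith
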